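/- Let F be a field and 𝒜 the 7-dimensional F-subalgebra of M_7(F) consisting of matrices A(α,a,b,c,d,e,f) with diagonal α, first row (α,a,b,c,d,e,f), and additional nonzero entries A[2,4]=b, A[2,7]=d, A[3,7]=e, A[5,7]=a, A[6,7]=b. Then 𝒜 is a centrally essential ring: for every A ∈ 𝒜 not in Z(𝒜), there exist nonzero central elements B, C ∈ Z(𝒜) with AB = C. -/
import Mathlib

@[simp]
lemma cons_val_five {α : Type*} {m : ℕ} (x : α) (u : Fin (m+5) → α) :
    Matrix.vecCons x u 5 = Matrix.vecHead (Matrix.vecTail (Matrix.vecTail (Matrix.vecTail (Matrix.vecTail u)))) :=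
  rfl

@[simp]
lemma cons_val_six {α : Type*} {m : ℕ} (x : α) (u : Fin (m+6) → α) :
    Matrix.vecCons x u 6 = Matrix.vecHead (Matrix.vecTail (Matrix.vecTail (Matrix.vecTail (Matrix.vecTail (Matrix.vecTail u))))) :=
  rfl

@[simp]
lemma vecTail_const {α : Type*} {n : ℕ} (x : α) :
    Matrix.vecTail (fun _ : Fin (n+1) => x) = fun _ : Fin n => x := rfl

@[simp]
lemma vecHead_const {α : Type*} {n : ℕ} (x : α) :
    Matrix.vecHead (fun _ : Fin (n+1) => x) = x := rfl

/-- The generic element of the 7-dimensional subalgebra `𝒜` of `M₇(F)` from the paper: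
diagonal `α`, first row `(α, a, b, c, d, e, f)`, and additional entries
`A[2,4] = b`, `A[2,7] = d`, `A[3,7] = e`, `A[5,7] = a`, `A[6,7] = b`. -/
def mat (F : Type*) [Field F] (α a b c d e f : F) : Matrix (Fin 7) (Fin 7) F :=
  !![α, a, b, c, d, e, f;
     0, α, 0, b, 0, 0, d;
     0, 0, α, 0, 0, 0, e;
     0, 0, 0, α, 0, 0, 0;
     0, 0, 0, 0, α, 0, a;
     0, 0, 0, 0, 0, α, b;
     0, 0, 0, 0, 0, 0, α]

/-- The underlying set of the algebra `𝒜`. -/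
def ASet (F : Type*) [Field F] : Set (Matrix (Fin 7) (Fin 7) F) :=
  {M | ∃ α a b c d e f : F, M = mat F α a b c d e f}

/-- The center of `𝒜` as a subset of `𝒜`. -/
def ZSet (F : Type*) [Field F] : Set (Matrix (Fin 7) (Fin 7) F) :=
  {M | M ∈ ASet F ∧ ∀ N ∈ ASet F, M * N = N * M}

set_option maxHeartbeats 4000000 in
lemma mat_mul (F : Type*) [Field F] (α a b c d e f β p q r s t u : F) :
    mat F α a b c d e f * mat F β p q r s t u =
    mat F (α*β) (α*p+β*a) (α*q+β*b) (α*r+a*q+β*c) (α*s+β*d) (α*t+β*e)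
      (α*u+a*s+b*t+d*p+e*q+β*f) := by
  ext i j
  fin_cases i <;> fin_cases j <;>
    simp [mat, Matrix.mul_apply, Fin.sum_univ_seven] <;> ring

lemma mat_central (F : Type*) [Field F] (α c d e f : F) :
    mat F α 0 0 c d e f ∈ ZSet F := by
  refine ⟨⟨α, 0, 0, c, d, e, f, rfl⟩, ?_⟩
  rintro N ⟨β, p, q, r, s, t, u, rfl⟩
  rw [mat_mul, mat_mul]
  congr 1 <;> ring

lemma mat_eq_zero5 (F : Type*) [Field F] {α a b c d e f : F}
    (h : mat F α a b c d e f = 0) : e = 0 := by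
  have := congrFun (congrFun h 0) 5
  simpa [mat] using this

lemma mat_eq_zero6 (F : Type*) [Field F] {α a b c d e f : F}
    (h : mat F α a b c d e f = 0) : f = 0 := by
  have := congrFun (congrFun h 0) 6
  simpa [mat] using this

lemma mat_eq_zero4 (F : Type*) [Field F] {α a b c d e f : F}
    (h : mat F α a b c d e f = 0) : d = 0 := by
  have := congrFun (congrFun h 0) 4
  simpa [mat] using this

/-- `𝒜` is a centrally essential ring: every noncentral element `A` admits nonzero
central `B`, `C` with `A * B = C`. -/
theorem stmt_14 (F : Type*) [Field F] :
    ∀ A ∈ ASet F, A ∉ ZSet F →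
      ∃ B C : Matrix (Fin 7) (Fin 7) F,
        B ∈ ZSet F ∧ C ∈ ZSet F ∧ B ≠ 0 ∧ C ≠ 0 ∧ A * B = C := by
  rintro A ⟨α, a, b, c, d, e, f, rfl⟩ hAZ
  by_cases ha : a = 0
  · by_cases hb : b = 0
    · exact absurd (ha ▸ hb ▸ mat_central F α c d e f) hAZ
    · refine ⟨mat F 0 0 0 0 0 1 0, mat F 0 0 0 0 0 α b,
        mat_central F 0 0 0 1 0, mat_central F 0 0 0 α b,
        fun h => one_ne_zero (mat_eq_zero5 F h),
        fun h => hb (mat_eq_zero6 F h), ?_⟩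
      rw [mat_mul]
      congr 1 <;> ring
  · refine ⟨mat F 0 0 0 0 1 0 0, mat F 0 0 0 0 α 0 a,
      mat_central F 0 0 1 0 0,
      mat_central F 0 0 α 0 a,
      fun h => one_ne_zero (mat_eq_zero4 F h),
      fun h => ha (mat_eq_zero6 F h), ?_⟩
    rw [mat_mul]
    congr 1 <;> ring
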